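/- Assume (q, n) is admissible and n > 1, and let AΓL_1(q) denote the subgroup of the group of permutations of F consisting of the semilinear maps v ↦ a·v^{p^i} + b with a ∈ Fˣ, b ∈ F and 0 ≤ i < e. Then AΓL_1(q) normalises A = AGL_1^{(n)}(q), and the homomorphism AΓL_1(q) → Aut(A) sending g to the automorphism h ↦ g h g⁻¹ is a group isomorphism. -/

import Mathlib

set_option linter.unusedSectionVars false
set_option linter.unusedVariables false
set_option maxHeartbeats 1600000

open Polynomial

section AuxAGL
variable {F : Type} [Field F] [Fintype F]

private lemma AGL_charP (p e : ℕ) (hp : p.Prime) (he : 1 ≤ e)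
    (hq : Fintype.card F = p ^ e) : CharP F p := by
  obtain ⟨m, hr, hc⟩ := FiniteField.card F (ringChar F)
  have hd : p ∣ ringChar F ^ (m : ℕ) := by
    rw [← hc, hq]; exact dvd_pow_self p (by omega)
  have : p = ringChar F := (Nat.prime_dvd_prime_iff_eq hp hr).mp (hp.dvd_of_dvd_pow hd)
  exact this ▸ ringChar.charP F

private lemma AGL_conj_eq (g h h' : Equiv.Perm F) (H : ∀ w, g (h w) = h' (g w)) :
    g * h * g⁻¹ = h' := by
  ext v
  simp only [Equiv.Perm.mul_apply]
  rw [H, (show g (g⁻¹ v) = v from Equiv.apply_symm_apply g v)]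

private lemma AGL_affine_pow (h : Equiv.Perm F) (c d : F) (hh : ∀ v, h v = c * v + d)
    (k : ℕ) : ∃ dk : F, ∀ v, (h ^ k) v = c ^ k * v + dk := by
  induction k with
  | zero => exact ⟨0, fun v => by simp⟩
  | succ k ih =>
    obtain ⟨dk, hk⟩ := ih
    refine ⟨c * dk + d, fun v => ?_⟩
    rw [pow_succ', Equiv.Perm.mul_apply, hk, hh, pow_succ']
    ring

private lemma AGL_addRight_pow (d : F) (k : ℕ) (v : F) :
    ((Equiv.addRight d) ^ k) v = v + k • d := by
  induction k with
  | zero => simp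
  | succ k ih =>
    rw [pow_succ', Equiv.Perm.mul_apply]
    show ((Equiv.addRight d ^ k) v) + d = _
    rw [ih, succ_nsmul, add_assoc]

private lemma AGL_mem_S_iff (n : ℕ) (S : Subgroup Fˣ) (hS : Nat.card S = n) :
    ∀ x : Fˣ, x ∈ S ↔ x ^ n = 1 := by
  classical
  have hn0 : 0 < n := by
    rw [← hS]; exact Nat.card_pos
  set R : Subgroup Fˣ := (powMonoidHom n : Fˣ →* Fˣ).ker with hR
  have hmemR : ∀ x : Fˣ, x ∈ R ↔ x ^ n = 1 := fun x => by
    simp [hR, MonoidHom.mem_ker, powMonoidHom_apply]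
  have hle : S ≤ R := by
    intro x hx
    rw [hmemR]
    have h1 : (⟨x, hx⟩ : S) ^ n = 1 := by
      rw [← hS, Nat.card_eq_fintype_card]; exact pow_card_eq_one
    have := congrArg (Subtype.val) h1
    simpa using this
  have hcardR : Nat.card R ≤ n := by
    have hinj : Function.Injective
        (fun x : R => (⟨((x : Fˣ) : F), by
          rw [Multiset.mem_toFinset, Polynomial.mem_nthRoots hn0]
          have : ((x : Fˣ) : F) ^ n = ((x : Fˣ) ^ n : Fˣ) := by push_cast; rfl
          rw [this, (hmemR _).mp x.2]; simp⟩ :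
          {y : F // y ∈ (Polynomial.nthRoots n (1 : F)).toFinset})) := by
      intro a b hab
      have : ((a : Fˣ) : F) = ((b : Fˣ) : F) := by
        simpa [Multiset.mem_toFinset] using congrArg Subtype.val hab
      exact Subtype.ext (Units.ext this)
    calc Nat.card R ≤ Nat.card {y : F // y ∈ (Polynomial.nthRoots n (1 : F)).toFinset} :=
          Nat.card_le_card_of_injective _ hinj
      _ = (Polynomial.nthRoots n (1 : F)).toFinset.card := by
          rw [Nat.card_eq_fintype_card, Fintype.card_coe]
      _ ≤ Multiset.card (Polynomial.nthRoots n (1 : F)) := Multiset.toFinset_card_le _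
      _ ≤ n := Polynomial.card_nthRoots n 1
  have : S = R := Subgroup.eq_of_le_of_card_ge hle (by rw [hS]; exact hcardR)
  intro x
  rw [this, hmemR]

private lemma AGL_unit_eq_one (p n : ℕ) (hp : p.Prime) (hpn : ¬ p ∣ n)
    (c : Fˣ) (hcp : c ^ p = 1) (hcn : c ^ n = 1) : c = 1 := by
  have hdvd1 : orderOf c ∣ p := orderOf_dvd_of_pow_eq_one hcp
  have hdvd2 : orderOf c ∣ n := orderOf_dvd_of_pow_eq_one hcn
  have hg : Nat.Coprime p n := (Nat.Prime.coprime_iff_not_dvd hp).mpr hpn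
  have : orderOf c ∣ 1 := hg ▸ Nat.dvd_gcd hdvd1 hdvd2
  rw [Nat.dvd_one] at this
  exact orderOf_eq_one_iff.mp this

private lemma AGL_pow_lt (p e k : ℕ) (hp : p.Prime) (hk1 : 1 ≤ k) (hke : k < e) :
    p ^ k < p ^ e - 1 := by
  have h1 : p ^ k ≤ p ^ (e - 1) := Nat.pow_le_pow_right hp.pos (by omega)
  have h2 : p ^ (e - 1) * 2 ≤ p ^ (e - 1) * p := Nat.mul_le_mul_left _ hp.two_le
  have h3 : p ^ (e - 1) * p = p ^ e := by rw [← pow_succ]; congr 1; omega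
  have h4 : 2 ≤ p ^ (e - 1) := by
    calc 2 ≤ p := hp.two_le
    _ = p ^ 1 := (pow_one p).symm
    _ ≤ p ^ (e - 1) := Nat.pow_le_pow_right hp.pos (by omega)
  omega

private lemma AGL_ringHom_frob (p e : ℕ) (hp : p.Prime) (he : 1 ≤ e)
    (hq : Fintype.card F = p ^ e) (τ : F →+* F) :
    ∃ i < e, ∀ x : F, τ x = x ^ p ^ i := by
  classical
  haveI : Fact p.Prime := ⟨hp⟩
  haveI : CharP F p := AGL_charP p e hp he hq
  letI : Algebra (ZMod p) F := ZMod.algebra F p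
  -- generator
  obtain ⟨ζ, hζ⟩ := IsCyclic.exists_monoid_generator (α := Fˣ)
  have hζz : ∀ x : Fˣ, x ∈ Subgroup.zpowers ζ := fun x => by
    obtain ⟨k, hk⟩ := hζ x; exact ⟨k, by simpa using hk⟩
  have hordζ : orderOf ζ = p ^ e - 1 := by
    rw [orderOf_eq_card_of_forall_mem_zpowers hζz, Nat.card_eq_fintype_card,
      Fintype.card_units, hq]
  set z : F := ((ζ : Fˣ) : F) with hzdef
  have hordz : orderOf z = p ^ e - 1 := by rw [orderOf_units]; exact hordζ
  -- the closure of {z} is everything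
  have hclz : ∀ x : F, x ∈ Subring.closure ({z} : Set F) := by
    intro x
    by_cases hx : x = 0
    · rw [hx]; exact Subring.zero_mem _
    · obtain ⟨k, hk⟩ := hζ (Units.mk0 x hx)
      have hzx : z ^ k = x := by
        have := congrArg (Units.val) hk
        simpa using this
      have hm := pow_mem (Subring.subset_closure (Set.mem_singleton z)) k
      rwa [hzx] at hm
  -- finrank
  have hfr : Module.finrank (ZMod p) F = e := by
    have := Module.card_eq_pow_finrank (K := ZMod p) (V := F)
    rw [ZMod.card, hq] at this
    exact (Nat.pow_right_injective hp.two_le this.symm)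
  -- minpoly
  have hint : IsIntegral (ZMod p) z := IsIntegral.of_finite (ZMod p) z
  set μ : (ZMod p)[X] := minpoly (ZMod p) z with hμdef
  have hμ0 : μ ≠ 0 := minpoly.ne_zero hint
  set ν : F[X] := μ.map (algebraMap (ZMod p) F) with hνdef
  have hν0 : ν ≠ 0 := Polynomial.map_ne_zero hμ0
  have hνdeg : ν.natDegree ≤ e := by
    rw [hνdef, Polynomial.natDegree_map]
    exact hfr ▸ minpoly.natDegree_le z
  -- turning ring homs into algebra homs
  have toAlg : ∀ f : F →+* F, ∃ fa : F →ₐ[ZMod p] F, ∀ x, fa x = f x := by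
    intro f
    refine ⟨⟨f, fun r => ?_⟩, fun x => rfl⟩
    exact RingHom.congr_fun (RingHom.ext_zmod (f.comp (algebraMap (ZMod p) F))
      (algebraMap (ZMod p) F)) r
  have hroot : ∀ f : F →+* F, f z ∈ ν.roots := by
    intro f
    obtain ⟨fa, hfa⟩ := toAlg f
    rw [Polynomial.mem_roots hν0]
    show eval (f z) ν = 0
    rw [hνdef, Polynomial.eval_map, ← Polynomial.aeval_def, ← hfa,
      Polynomial.aeval_algHom_apply, minpoly.aeval, map_zero]
  -- the frobenius powers
  have hfrob : ∀ i : ℕ, ∀ x : F, ((frobenius F p ^ i : F →+* F)) x = x ^ p ^ i := by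
    intro i
    induction i with
    | zero => intro x; simp
    | succ i ih =>
      intro x
      rw [pow_succ, RingHom.mul_def, RingHom.comp_apply, frobenius_def, ih, ← pow_mul,
        ← pow_succ']
  -- q ≥ 3 is not needed; distinctness of the frobenius images of z
  have hq1 : 1 < p ^ e := Nat.one_lt_pow (by omega) hp.one_lt
  have hinj : Set.InjOn (fun i => z ^ p ^ i) (Finset.range e) := by
    intro i hi j hj hij
    simp only [Finset.coe_range, Set.mem_Iio] at hi hj
    by_contra hne
    have he2 : 2 ≤ e := by
      rcases Nat.lt_or_ge e 2 with h | h
      · interval_cases e <;> omega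
      · exact h
    have hlt : ∀ k, k < e → p ^ k < p ^ e - 1 := by
      intro k hk
      have h1 : p ^ k ≤ p ^ (e - 1) := Nat.pow_le_pow_right hp.pos (by omega)
      have h2 : p ^ (e - 1) * 2 ≤ p ^ (e - 1) * p := by
        exact Nat.mul_le_mul_left _ hp.two_le
      have h3 : p ^ (e - 1) * p = p ^ e := by
        rw [← pow_succ]; congr 1; omega
      have h4 : 2 ≤ p ^ (e - 1) := by
        calc 2 ≤ p := hp.two_le
        _ = p ^ 1 := (pow_one p).symm
        _ ≤ p ^ (e - 1) := Nat.pow_le_pow_right hp.pos (by omega)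
      omega
    -- lift to units
    have hu : ζ ^ p ^ i = ζ ^ p ^ j := by
      apply Units.ext
      push_cast
      exact hij
    rw [pow_inj_mod, hordζ, Nat.mod_eq_of_lt (hlt i hi), Nat.mod_eq_of_lt (hlt j hj)] at hu
    exact hne (Nat.pow_right_injective hp.two_le hu)
  -- the finset of roots
  set T : Finset F := (Finset.range e).image (fun i => z ^ p ^ i) with hTdef
  have hTcard : T.card = e := by
    rw [hTdef, Finset.card_image_of_injOn hinj, Finset.card_range]
  have hTsub : T ⊆ ν.roots.toFinset := by
    intro x hx
    rw [hTdef, Finset.mem_image] at hx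
    obtain ⟨i, hi, rfl⟩ := hx
    rw [Multiset.mem_toFinset]
    have := hroot (frobenius F p ^ i)
    rwa [hfrob i z] at this
  have hTeq : T = ν.roots.toFinset := by
    apply Finset.eq_of_subset_of_card_le hTsub
    calc ν.roots.toFinset.card ≤ Multiset.card ν.roots := Multiset.toFinset_card_le _
      _ ≤ ν.natDegree := Polynomial.card_roots' ν
      _ ≤ e := hνdeg
      _ = T.card := hTcard.symm
  -- τ z is one of the frobenius images
  have hτz : τ z ∈ T := by
    rw [hTeq, Multiset.mem_toFinset]; exact hroot τ
  rw [hTdef, Finset.mem_image] at hτz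
  obtain ⟨i, hi, hzi⟩ := hτz
  rw [Finset.mem_range] at hi
  refine ⟨i, hi, ?_⟩
  -- equalizer argument
  have hEq : ∀ x : F, x ∈ RingHom.eqLocus τ (frobenius F p ^ i) := by
    intro x
    have hle : Subring.closure ({z} : Set F) ≤ RingHom.eqLocus τ (frobenius F p ^ i) := by
      apply Subring.closure_le.mpr
      intro y hy
      rw [Set.mem_singleton_iff] at hy
      subst hy
      show τ z = _
      rw [hfrob i z, ← hzi]
    exact hle (hclz x)
  intro x
  have := hEq x
  rw [← hfrob i x]
  exact this

private lemma AGL_S_closure (p e n : ℕ) (hp : p.Prime) (he : 1 ≤ e)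
    (hq : Fintype.card F = p ^ e)
    (hadm : IsLeast {i : ℕ | 1 ≤ i ∧ p ^ i ≡ 1 [MOD n]} e)
    (hn1 : 1 < n)
    (S : Subgroup Fˣ) (hS : Nat.card S = n) :
    ∀ x : F, x ∈ Subring.closure (Units.val '' (S : Set Fˣ)) := by
  classical
  haveI : Fact p.Prime := ⟨hp⟩
  haveI : CharP F p := AGL_charP p e hp he hq
  set R : Subring F := Subring.closure (Units.val '' (S : Set Fˣ)) with hRdef
  -- R is closed under inverses
  have hinv : ∀ x ∈ R, x⁻¹ ∈ R := by
    intro x hx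
    by_cases hx0 : x = 0
    · rw [hx0, inv_zero]; exact Subring.zero_mem _
    · have hinj : Function.Injective (fun r : R => (⟨x * (r : F), R.mul_mem hx r.2⟩ : R)) := by
        intro r r' hrr'
        have : x * (r : F) = x * (r' : F) := congrArg Subtype.val hrr'
        exact Subtype.ext (mul_left_cancel₀ hx0 this)
      obtain ⟨r, hr⟩ := Finite.surjective_of_injective hinj ⟨1, R.one_mem⟩
      have hr1 : x * (r : F) = 1 := congrArg Subtype.val hr
      have : x⁻¹ = (r : F) := inv_eq_of_mul_eq_one_right hr1
      rw [this]; exact r.2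
  set K : Subfield F := { toSubring := R, inv_mem' := hinv } with hKdef
  haveI : Fintype K := Fintype.ofFinite K
  haveI : CharP K p := (K.subtype : K →+* F).charP K.subtype.injective p
  obtain ⟨f, hfp, hcardK⟩ := FiniteField.card K p
  -- an element of multiplicative order n in K
  obtain ⟨ξ, hξ⟩ := IsCyclic.exists_monoid_generator (α := S)
  have hξz : ∀ x : S, x ∈ Subgroup.zpowers ξ := fun x => by
    obtain ⟨k, hk⟩ := hξ x; exact ⟨k, by simpa using hk⟩
  have hordξ : orderOf ξ = n := by
    rw [orderOf_eq_card_of_forall_mem_zpowers hξz, hS]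
  have hordu : orderOf ((ξ : Fˣ) : F) = n := by
    rw [orderOf_units]
    rw [← orderOf_injective S.subtype Subtype.val_injective ξ] at hordξ
    exact hordξ
  have hmemK : ((ξ : Fˣ) : F) ∈ K := by
    apply Subring.subset_closure
    exact ⟨(ξ : Fˣ), ξ.2, rfl⟩
  have hzK0 : ((ξ : Fˣ) : F) ≠ 0 := Units.ne_zero _
  set zK : K := ⟨((ξ : Fˣ) : F), hmemK⟩ with hzKdef
  have hordzK : orderOf zK = n := by
    rw [← orderOf_injective (K.subtype : K →+* F).toMonoidHom K.subtype.injective zK]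
    exact hordu
  have hzK0' : zK ≠ 0 := fun h => hzK0 (congrArg Subtype.val h)
  obtain ⟨uK, huK⟩ := (isUnit_iff_ne_zero.mpr hzK0')
  have horduK : orderOf uK = n := by rw [← hordzK, ← huK, orderOf_units]
  have hdvd : n ∣ Nat.card K - 1 := by
    have h1 : orderOf uK ∣ Nat.card Kˣ := orderOf_dvd_natCard uK
    rwa [horduK, Nat.card_units] at h1
  -- K has p ^ f elements with p ^ f ≡ 1 mod n, so e ≤ f
  have hcardK' : Nat.card K = p ^ (f : ℕ) := by rw [Nat.card_eq_fintype_card, hcardK]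
  have hmod : p ^ (f : ℕ) ≡ 1 [MOD n] := by
    rw [Nat.ModEq.comm, Nat.modEq_iff_dvd' (Nat.one_le_pow _ _ hp.pos)]
    rw [hcardK'] at hdvd
    exact hdvd
  have hef : e ≤ (f : ℕ) := hadm.2 ⟨f.2, hmod⟩
  -- also f ≤ e by cardinality
  have hfe : (f : ℕ) ≤ e := by
    have h1 : Fintype.card K ≤ Fintype.card F := Fintype.card_le_of_injective _ K.subtype.injective
    rw [hcardK, hq] at h1
    exact (Nat.pow_le_pow_iff_right hp.one_lt).mp h1
  have hcards : Fintype.card K = Fintype.card F := by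
    rw [hcardK, hq]
    congr 1
    omega
  -- hence K = F
  have hsurj : Function.Surjective (K.subtype : K →+* F) :=
    ((Fintype.bijective_iff_injective_and_card _).mpr ⟨K.subtype.injective, hcards⟩).2
  intro x
  obtain ⟨y, hy⟩ := hsurj x
  have : x ∈ K := hy ▸ y.2
  exact this


end AuxAGL

/-- Let `p` be prime, `e ≥ 1`, `q = p^e`, `F` a finite field with `q`
elements, `n` a divisor of `q - 1` (even if `p` is odd), and `S` the subgroup of order
`n` of `Fˣ`.  Assume `(q, n)` is admissible and `n > 1`.  Let `A = AGL₁⁽ⁿ⁾(q)` be the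
subgroup of `Perm F` of affine maps `v ↦ a v + b` with `a ∈ S`, `b ∈ F`, and let
`Γ = AΓL₁(q)` be the subgroup of `Perm F` of semilinear maps `v ↦ a·v^{p^i} + b` with
`a ∈ Fˣ`, `b ∈ F`, `0 ≤ i < e`.  Then `Γ` normalises `A`, and the homomorphism
`Γ → Aut(A)`, `g ↦ (h ↦ g h g⁻¹)`, is a group isomorphism. -/
theorem AGammaL_is_automorphism_group_of_AGL
    (p e n : ℕ) (hp : p.Prime) (he : 1 ≤ e)
    (F : Type) [Field F] [Fintype F] (hq : Fintype.card F = p ^ e)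
    (hn : n ∣ p ^ e - 1) (hpar : Odd p → Even n)
    (S : Subgroup Fˣ) (hS : Nat.card S = n)
    (hadm : IsLeast {i : ℕ | 1 ≤ i ∧ p ^ i ≡ 1 [MOD n]} e)
    (hn1 : 1 < n)
    (A : Subgroup (Equiv.Perm F))
    (hA : ∀ g : Equiv.Perm F,
      g ∈ A ↔ ∃ a ∈ S, ∃ b : F, ∀ v : F, g v = (a : F) * v + b)
    (Γ : Subgroup (Equiv.Perm F))
    (hΓ : ∀ g : Equiv.Perm F,
      g ∈ Γ ↔ ∃ a : Fˣ, ∃ b : F, ∃ i < e, ∀ v : F, g v = (a : F) * v ^ p ^ i + b) :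
    (∀ g ∈ Γ, ∀ h ∈ A, g * h * g⁻¹ ∈ A) ∧
      ∃ φ : Γ →* MulAut A,
        (∀ (g : Γ) (h : A),
          ((φ g h : A) : Equiv.Perm F) =
            (g : Equiv.Perm F) * (h : Equiv.Perm F) * (g : Equiv.Perm F)⁻¹) ∧
        Function.Bijective φ := by
  classical
  haveI : Fact p.Prime := ⟨hp⟩
  haveI hcharF : CharP F p := AGL_charP p e hp he hq
  have hSmem : ∀ x : Fˣ, x ∈ S ↔ x ^ n = 1 := AGL_mem_S_iff n S hS
  have hq1 : 1 ≤ p ^ e := Nat.one_le_pow _ _ hp.pos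
  have hq2 : 2 ≤ p ^ e := by
    calc 2 ≤ p := hp.two_le
    _ = p ^ 1 := (pow_one p).symm
    _ ≤ p ^ e := Nat.pow_le_pow_right hp.pos he
  have hq3 : 3 ≤ p ^ e := by
    have : n ≤ p ^ e - 1 := Nat.le_of_dvd (by omega) hn
    omega
  have hpn : ¬ p ∣ n := by
    intro hdvd
    have h1 : p ∣ p ^ e - 1 := hdvd.trans hn
    have h2 : p ∣ p ^ e := dvd_pow_self p (by omega)
    have h3 : p ∣ 1 := by
      have h4 : p ^ e - (p ^ e - 1) = 1 := by omega
      exact h4 ▸ Nat.dvd_sub h2 h1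
    rw [Nat.dvd_one] at h3
    have := hp.two_le
    omega
  -- Part 1: normalisation
  have hnorm : ∀ g ∈ Γ, ∀ h ∈ A, g * h * g⁻¹ ∈ A := by
    intro g hg h hh
    obtain ⟨a, b, i, hi, hgf⟩ := (hΓ g).mp hg
    obtain ⟨c, hcS, d, hhf⟩ := (hA h).mp hh
    rw [hA]
    refine ⟨c ^ p ^ i, ?_, (a : F) * d ^ p ^ i + b - ((c : F)) ^ p ^ i * b, ?_⟩
    · rw [hSmem, ← pow_mul, mul_comm, pow_mul, (hSmem c).mp hcS, one_pow]
    · intro v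
      rw [Equiv.Perm.mul_apply, Equiv.Perm.mul_apply, hhf, hgf]
      conv_rhs => rw [← (show g (g⁻¹ v) = v from Equiv.apply_symm_apply g v), hgf]
      rw [add_pow_char_pow, mul_pow]
      push_cast
      ring
  refine ⟨hnorm, ?_⟩
  -- the conjugation homomorphism
  have hmc : ∀ (g : Γ) (h : A), (g : Equiv.Perm F) * h * (g : Equiv.Perm F)⁻¹ ∈ A :=
    fun g h => hnorm g g.2 h h.2
  have hmc' : ∀ (g : Γ) (h : A), (g : Equiv.Perm F)⁻¹ * h * (g : Equiv.Perm F) ∈ A := by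
    intro g h
    have := hnorm _ (inv_mem g.2) h h.2
    simpa using this
  let Φ : Γ → MulAut A := fun g =>
    { toFun := fun h => ⟨(g : Equiv.Perm F) * h * (g : Equiv.Perm F)⁻¹, hmc g h⟩
      invFun := fun h => ⟨(g : Equiv.Perm F)⁻¹ * h * (g : Equiv.Perm F), hmc' g h⟩
      left_inv := fun h => Subtype.ext (by simp only; group)
      right_inv := fun h => Subtype.ext (by simp only; group)
      map_mul' := fun h h' => Subtype.ext (by
        simp only [Subgroup.coe_mul]
        group) }
  have hΦval : ∀ (g : Γ) (h : A),
      ((Φ g h : A) : Equiv.Perm F) =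
        (g : Equiv.Perm F) * (h : Equiv.Perm F) * (g : Equiv.Perm F)⁻¹ := fun g h => rfl
  let φ : Γ →* MulAut A :=
    { toFun := Φ
      map_one' := by
        apply MulEquiv.ext
        intro h
        apply Subtype.ext
        simp [Φ]
      map_mul' := fun g g' => by
        apply MulEquiv.ext
        intro h
        apply Subtype.ext
        simp only [Φ, MulEquiv.coe_mk, Equiv.coe_fn_mk, MulAut.mul_apply, Subgroup.coe_mul]
        group }
  refine ⟨φ, fun g h => rfl, ?_, ?_⟩
  · -- injectivity
    rw [injective_iff_map_eq_one]
    intro g hg1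
    have hcomm : ∀ h : Equiv.Perm F, h ∈ A →
        (g : Equiv.Perm F) * h * (g : Equiv.Perm F)⁻¹ = h := by
      intro h hh
      have h2 : ((φ g) ⟨h, hh⟩ : A) = ⟨h, hh⟩ := by rw [hg1]; rfl
      exact congrArg Subtype.val h2
    have hfun : ∀ h : Equiv.Perm F, h ∈ A → ∀ w,
        (g : Equiv.Perm F) (h w) = h ((g : Equiv.Perm F) w) := by
      intro h hh w
      have h3 := hcomm h hh
      have h4 := congrArg (fun π : Equiv.Perm F => π ((g : Equiv.Perm F) w)) h3
      simp only [Equiv.Perm.mul_apply] at h4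
      rw [(show (g : Equiv.Perm F)⁻¹ ((g : Equiv.Perm F) w) = w from
        Equiv.symm_apply_apply (g : Equiv.Perm F) w)] at h4
      exact h4
    obtain ⟨a, b, i, hi, hgf⟩ := (hΓ (g : Equiv.Perm F)).mp g.2
    have htd : ∀ d : F, Equiv.addRight d ∈ A := fun d =>
      (hA _).mpr ⟨1, S.one_mem, d, fun v => by simp⟩
    have hkey : ∀ d : F, (a : F) * d ^ p ^ i = d := by
      intro d
      have h5 := hfun _ (htd d) 0
      simp only [Equiv.coe_addRight] at h5
      rw [hgf, hgf, zero_add, zero_pow (pow_pos hp.pos i).ne', mul_zero, zero_add] at h5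
      linear_combination h5
    have ha1 : (a : F) = 1 := by
      have := hkey 1
      rwa [one_pow, mul_one] at this
    have hi0 : i = 0 := by
      by_contra hine
      obtain ⟨ζ, hζ⟩ := IsCyclic.exists_monoid_generator (α := Fˣ)
      have hζz : ∀ x : Fˣ, x ∈ Subgroup.zpowers ζ := fun x => by
        obtain ⟨k, hk⟩ := hζ x; exact ⟨k, by simpa using hk⟩
      have hordζ : orderOf ζ = p ^ e - 1 := by
        rw [orderOf_eq_card_of_forall_mem_zpowers hζz, Nat.card_eq_fintype_card,
          Fintype.card_units, hq]
      have h6 : ((ζ : F)) ^ p ^ i = (ζ : F) := by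
        have := hkey (ζ : F); rwa [ha1, one_mul] at this
      have h7 : ζ ^ p ^ i = ζ ^ 1 := by
        apply Units.ext
        push_cast
        rw [h6, pow_one]
      rw [pow_inj_mod, hordζ] at h7
      have hlt := AGL_pow_lt p e i hp (by omega) hi
      rw [Nat.mod_eq_of_lt hlt, Nat.mod_eq_of_lt (by omega)] at h7
      have hgt : 1 < p ^ i := Nat.one_lt_pow (by omega) hp.one_lt
      omega
    have hb0 : b = 0 := by
      obtain ⟨c, hcS, hc1⟩ : ∃ c ∈ S, c ≠ 1 := by
        by_contra hall
        push_neg at hall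
        have hbot : S = ⊥ := (Subgroup.eq_bot_iff_forall S).mpr hall
        rw [hbot, Subgroup.card_bot] at hS
        omega
      have hmcA : Equiv.mulLeft₀ (c : F) (Units.ne_zero c) ∈ A :=
        (hA _).mpr ⟨c, hcS, 0, fun v => by simp [Equiv.mulLeft₀_apply]⟩
      have h5 := hfun _ hmcA 0
      simp only [Equiv.mulLeft₀_apply, mul_zero] at h5
      rw [hgf 0] at h5
      rw [zero_pow (pow_pos hp.pos i).ne', mul_zero, zero_add] at h5
      -- h5 : b = c * b
      have hcne : (c : F) ≠ 1 := fun hh => hc1 (Units.ext (by rwa [Units.val_one]))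
      have h8 : ((c : F) - 1) * b = 0 := by linear_combination -h5
      rcases mul_eq_zero.mp h8 with h9 | h9
      · exact absurd (by linear_combination h9) hcne
      · exact h9
    have hgid : (g : Equiv.Perm F) = 1 := by
      ext v
      rw [hgf, ha1, hi0, hb0]
      simp
    exact Subtype.ext hgid
  · -- surjectivity
    intro ψ
    have htA : ∀ d : F, Equiv.addRight d ∈ A := fun d =>
      (hA _).mpr ⟨1, S.one_mem, d, fun v => by simp⟩
    set tA : F → A := fun d => ⟨Equiv.addRight d, htA d⟩ with htAdef
    have hmA : ∀ c : Fˣ, c ∈ S → Equiv.mulLeft₀ (c : F) (Units.ne_zero c) ∈ A := fun c hc =>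
      (hA _).mpr ⟨c, hc, 0, fun v => by simp [Equiv.mulLeft₀_apply]⟩
    set mA : (c : Fˣ) → c ∈ S → A :=
      fun c hc => ⟨Equiv.mulLeft₀ (c : F) (Units.ne_zero c), hmA c hc⟩ with hmAdef
    have hAcoe_mul : ∀ x y : A,
        ((x * y : A) : Equiv.Perm F) = (x : Equiv.Perm F) * (y : Equiv.Perm F) :=
      fun x y => rfl
    have hAcoe_inv : ∀ x : A, ((x⁻¹ : A) : Equiv.Perm F) = (x : Equiv.Perm F)⁻¹ :=
      fun x => rfl
    have hAcoe_pow : ∀ (x : A) (k : ℕ),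
        ((x ^ k : A) : Equiv.Perm F) = (x : Equiv.Perm F) ^ k := by
      intro x k
      induction k with
      | zero => rfl
      | succ k ih => rw [pow_succ, pow_succ, hAcoe_mul, ih]
    have htp0 : ∀ d : F, (Equiv.addRight d : Equiv.Perm F) ^ p = 1 := by
      intro d
      ext v
      rw [AGL_addRight_pow]
      simp [nsmul_eq_mul, CharP.cast_eq_zero F p]
    have hordp : ∀ h : Equiv.Perm F, h ∈ A → h ^ p = 1 → ∃ d : F, h = Equiv.addRight d := by
      intro h hh hp1
      obtain ⟨c, hc, d, hf⟩ := (hA h).mp hh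
      obtain ⟨dp, hdp⟩ := AGL_affine_pow h (c : F) d hf p
      have h0 : (h ^ p) 0 = 0 := by rw [hp1]; rfl
      have h1 : (h ^ p) 1 = 1 := by rw [hp1]; rfl
      rw [hdp 0, mul_zero, zero_add] at h0
      rw [hdp 1, mul_one, h0, add_zero] at h1
      have hcp : c ^ p = 1 := Units.ext (by push_cast; rw [h1])
      have hc1 : c = 1 := AGL_unit_eq_one p n hp hpn c hcp ((hSmem c).mp hc)
      refine ⟨d, ?_⟩
      ext v
      rw [hf, hc1]
      simp [add_comm]
    have hψtp : ∀ d : F, ∃ d' : F, ((ψ (tA d) : A) : Equiv.Perm F) = Equiv.addRight d' := by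
      intro d
      apply hordp _ (ψ (tA d)).2
      have h1 : (tA d) ^ p = 1 := by
        apply Subtype.ext
        rw [hAcoe_pow]
        exact htp0 d
      have h2 : (ψ (tA d)) ^ p = 1 := by rw [← map_pow, h1, map_one]
      have h3 := congrArg (Subtype.val) h2
      rw [hAcoe_pow] at h3
      exact h3
    set α : F → F := fun d => ((ψ (tA d) : A) : Equiv.Perm F) 0 with hαdef
    have hα : ∀ d : F, ((ψ (tA d) : A) : Equiv.Perm F) = Equiv.addRight (α d) := by
      intro d
      obtain ⟨d', hd'⟩ := hψtp d
      have hdd : α d = d' := by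
        rw [hαdef]
        simp only
        rw [hd']
        simp [Equiv.coe_addRight]
      rw [hdd, hd']
    have htadd : ∀ d d' : F, tA (d + d') = tA d * tA d' := by
      intro d d'
      apply Subtype.ext
      rw [hAcoe_mul]
      ext v
      simp only [htAdef, Equiv.Perm.mul_apply, Equiv.coe_addRight]
      ring
    have hαadd : ∀ d d' : F, α (d + d') = α d + α d' := by
      intro d d'
      have h1 : ψ (tA (d + d')) = ψ (tA d) * ψ (tA d') := by rw [← map_mul, ← htadd]
      have h2 := congrArg (fun x : A => ((x : Equiv.Perm F)) 0) h1
      simp only [hAcoe_mul, Equiv.Perm.mul_apply, hα, Equiv.coe_addRight] at h2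
      rw [zero_add, zero_add] at h2
      rw [h2]
      ring
    have hα0 : α 0 = 0 := by
      have h1 : tA 0 = 1 := by
        apply Subtype.ext
        ext v
        simp [htAdef]
      rw [hαdef]
      simp only [h1, map_one]
      rfl
    have hαinj : Function.Injective α := by
      intro d d' hdd'
      have h1 : ψ (tA d) = ψ (tA d') := Subtype.ext (by rw [hα, hα, hdd'])
      have h2 : tA d = tA d' := ψ.injective h1
      have h3 := congrArg (fun x : A => ((x : Equiv.Perm F)) 0) h2
      simpa [htAdef, Equiv.coe_addRight] using h3
    have hψm : ∀ (c : Fˣ) (hc : c ∈ S), ∃ s : Fˣ, s ∈ S ∧ ∃ b : F,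
        ∀ v, ((ψ (mA c hc) : A) : Equiv.Perm F) v = (s : F) * v + b := by
      intro c hc
      obtain ⟨s, hs, b, hf⟩ := (hA _).mp (ψ (mA c hc)).2
      exact ⟨s, hs, b, hf⟩
    have hrel : ∀ (c : Fˣ) (hc : c ∈ S) (s b : F),
        (∀ v, ((ψ (mA c hc) : A) : Equiv.Perm F) v = s * v + b) →
        ∀ d : F, α ((c : F) * d) = s * α d := by
      intro c hc s b hf d
      have h1 : mA c hc * tA d * (mA c hc)⁻¹ = tA ((c : F) * d) := by
        apply Subtype.ext
        rw [hAcoe_mul, hAcoe_mul, hAcoe_inv]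
        apply AGL_conj_eq
        intro w
        simp only [htAdef, hmAdef, Equiv.coe_addRight, Equiv.mulLeft₀_apply]
        ring
      have h2 := congrArg ψ h1
      rw [map_mul, map_mul, map_inv] at h2
      have h3 := congrArg Subtype.val h2
      rw [hAcoe_mul, hAcoe_mul, hAcoe_inv, hα, hα] at h3
      have h4 : ((ψ (mA c hc) : A) : Equiv.Perm F) * Equiv.addRight (α d) *
          ((ψ (mA c hc) : A) : Equiv.Perm F)⁻¹ = Equiv.addRight (s * α d) := by
        apply AGL_conj_eq
        intro w
        simp only [Equiv.coe_addRight]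
        rw [hf, hf]
        ring
      rw [h4] at h3
      have h5 := congrArg (fun π : Equiv.Perm F => π 0) h3
      simp only [Equiv.coe_addRight, zero_add] at h5
      exact h5.symm
    have hclS := AGL_S_closure p e n hp he hq hadm hn1 S hS
    set a : F := α 1 with hadef2
    have ha0 : a ≠ 0 := by
      intro hcon
      have h1 : α 1 = α 0 := by rw [hα0, ← hadef2, hcon]
      exact one_ne_zero (hαinj h1)
    set τ : F → F := fun x => a⁻¹ * α x with hτdef
    have hτadd : ∀ x y : F, τ (x + y) = τ x + τ y := by
      intro x y
      simp only [hτdef]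
      rw [hαadd]
      ring
    have hτ0 : τ 0 = 0 := by simp only [hτdef]; rw [hα0, mul_zero]
    have hτ1 : τ 1 = 1 := by
      simp only [hτdef]
      exact inv_mul_cancel₀ ha0
    have hτS : ∀ (c : Fˣ) (hc : c ∈ S) (x : F), τ ((c : F) * x) = τ (c : F) * τ x := by
      intro c hc x
      obtain ⟨s, hs, b, hf⟩ := hψm c hc
      have h1 := hrel c hc (s : F) b hf
      have h2 : τ (c : F) = (s : F) := by
        have h3 := h1 1
        rw [mul_one] at h3
        simp only [hτdef]
        rw [h3, mul_comm ((s : F)) (α 1), ← mul_assoc, inv_mul_cancel₀ ha0, one_mul]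
      rw [h2]
      simp only [hτdef]
      rw [h1 x]
      ring
    have hτmul : ∀ x, x ∈ Subring.closure (Units.val '' (S : Set Fˣ)) →
        ∀ y, τ (x * y) = τ x * τ y := by
      intro x hx
      induction hx using Subring.closure_induction with
      | mem z hz =>
        obtain ⟨c, hc, rfl⟩ := hz
        exact fun y => hτS c hc y
      | zero => intro y; rw [zero_mul, hτ0, zero_mul]
      | one => intro y; rw [one_mul, hτ1, one_mul]
      | add x₁ x₂ hx₁ hx₂ ih₁ ih₂ =>
        intro y
        rw [add_mul, hτadd, ih₁, ih₂, hτadd, add_mul]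
      | neg x₁ hx₁ ih =>
        intro y
        have hτneg : ∀ u : F, τ (-u) = - τ u := by
          intro u
          have h6 := hτadd u (-u)
          rw [add_neg_cancel, hτ0] at h6
          linear_combination -h6
        rw [neg_mul, hτneg, ih, hτneg, neg_mul]
      | mul x₁ x₂ hx₁ hx₂ ih₁ ih₂ =>
        intro y
        rw [mul_assoc, ih₁, ih₂, ih₁]
        simp only [hτdef]
        ring
    have hτmul' : ∀ x y : F, τ (x * y) = τ x * τ y := fun x y => hτmul x (hclS x) y
    obtain ⟨i, hi, hτfrob⟩ := AGL_ringHom_frob p e hp he hq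
      { toFun := τ, map_one' := hτ1, map_mul' := hτmul', map_zero' := hτ0, map_add' := hτadd }
    have hτfrob' : ∀ x : F, τ x = x ^ p ^ i := hτfrob
    have hατ : ∀ x : F, α x = a * x ^ p ^ i := by
      intro x
      rw [← hτfrob' x]
      simp only [hτdef]
      rw [← mul_assoc, mul_inv_cancel₀ ha0, one_mul]
    obtain ⟨c₀, hc₀S, hc₀1⟩ : ∃ c ∈ S, c ≠ 1 := by
      by_contra hall
      push_neg at hall
      have hbot : S = ⊥ := (Subgroup.eq_bot_iff_forall S).mpr hall
      rw [hbot, Subgroup.card_bot] at hS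
      omega
    obtain ⟨s₀, hs₀S, b₀', hf₀⟩ := hψm c₀ hc₀S
    have hs₀1 : (s₀ : F) ≠ 1 := by
      intro hs1
      have h1 : ((ψ (mA c₀ hc₀S) : A) : Equiv.Perm F) = Equiv.addRight b₀' := by
        ext v
        rw [hf₀ v, hs1, one_mul]
        simp [Equiv.coe_addRight]
      have h2 : (ψ (mA c₀ hc₀S)) ^ p = 1 := by
        apply Subtype.ext
        rw [hAcoe_pow, h1, htp0]
        rfl
      have h3 : (mA c₀ hc₀S) ^ p = 1 := by
        apply ψ.injective
        rw [map_pow, h2, map_one]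
      have h4 := congrArg Subtype.val h3
      rw [hAcoe_pow] at h4
      simp only [hmAdef] at h4
      obtain ⟨dp, hdp⟩ := AGL_affine_pow (Equiv.mulLeft₀ (c₀ : F) (Units.ne_zero c₀))
        (c₀ : F) 0 (fun v => by simp [Equiv.mulLeft₀_apply]) p
      have h5 : ((Equiv.mulLeft₀ (c₀ : F) (Units.ne_zero c₀)) ^ p) 0 = 0 := by rw [h4]; rfl
      have h6 : ((Equiv.mulLeft₀ (c₀ : F) (Units.ne_zero c₀)) ^ p) 1 = 1 := by rw [h4]; rfl
      rw [hdp 0, mul_zero, zero_add] at h5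
      rw [hdp 1, mul_one, h5, add_zero] at h6
      have hcp : c₀ ^ p = 1 := Units.ext (by push_cast; rw [h6])
      exact hc₀1 (AGL_unit_eq_one p n hp hpn c₀ hcp ((hSmem c₀).mp hc₀S))
    set b₀ : F := (1 - (s₀ : F))⁻¹ * b₀' with hb₀def
    have hs₀ne : (1 : F) - (s₀ : F) ≠ 0 := sub_ne_zero.mpr (Ne.symm hs₀1)
    have hfix : (s₀ : F) * b₀ + b₀' = b₀ := by
      simp only [hb₀def]
      field_simp
      ring
    have hconst : ∀ (c : Fˣ) (hc : c ∈ S) (s b : F),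
        (∀ v, ((ψ (mA c hc) : A) : Equiv.Perm F) v = s * v + b) → s * b₀ + b = b₀ := by
      intro c hc s b hf
      have hcm : mA c hc * mA c₀ hc₀S = mA c₀ hc₀S * mA c hc := by
        apply Subtype.ext
        rw [hAcoe_mul, hAcoe_mul]
        ext v
        simp only [hmAdef, Equiv.Perm.mul_apply, Equiv.mulLeft₀_apply]
        ring
      have h1 := congrArg ψ hcm
      rw [map_mul, map_mul] at h1
      have h2 := congrArg Subtype.val h1
      rw [hAcoe_mul, hAcoe_mul] at h2
      have h3 := congrArg (fun π : Equiv.Perm F => π b₀) h2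
      simp only [Equiv.Perm.mul_apply] at h3
      rw [hf₀, hf, hfix, hf, hf₀] at h3
      have h4 : ((1 : F) - (s₀ : F)) * ((s * b₀ + b) - b₀) = 0 := by
        linear_combination h3 + hfix
      rcases mul_eq_zero.mp h4 with h6 | h6
      · exact absurd h6 hs₀ne
      · linear_combination h6
    have hpowinj : Function.Injective (fun x : F => x ^ p ^ i) := by
      intro x y hxy
      simp only at hxy
      have h1 : (x - y) ^ p ^ i = 0 := by
        rw [sub_pow_char_pow, hxy, sub_self]
      have h2 : x - y = 0 := pow_eq_zero_iff (pow_pos hp.pos i).ne' |>.mp h1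
      exact sub_eq_zero.mp h2
    have hbij : Function.Bijective (fun x : F => x ^ p ^ i) :=
      ⟨hpowinj, Finite.surjective_of_injective hpowinj⟩
    set gperm : Equiv.Perm F :=
      (Equiv.ofBijective _ hbij).trans ((Equiv.mulLeft₀ a ha0).trans (Equiv.addRight b₀))
      with hgdef
    have hgval : ∀ v : F, gperm v = a * v ^ p ^ i + b₀ := fun v => rfl
    have hgΓ : gperm ∈ Γ := (hΓ _).mpr ⟨Units.mk0 a ha0, b₀, i, hi, fun v => hgval v⟩
    refine ⟨⟨gperm, hgΓ⟩, ?_⟩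
    apply MulEquiv.ext
    intro h
    obtain ⟨c, hc, d, hf⟩ := (hA (h : Equiv.Perm F)).mp h.2
    obtain ⟨s, hsS, b, hfs⟩ := hψm c hc
    have hτc : (c : F) ^ p ^ i = (s : F) := by
      have h1 := hrel c hc (s : F) b hfs 1
      rw [mul_one] at h1
      have h2 : α 1 = a := rfl
      rw [hατ ((c : F)), h2] at h1
      rw [mul_comm ((s : F)) a] at h1
      exact mul_left_cancel₀ ha0 h1
    have hdec : h = tA d * mA c hc := by
      apply Subtype.ext
      rw [hAcoe_mul]
      ext v
      rw [hf v]
      simp only [htAdef, hmAdef, Equiv.Perm.mul_apply, Equiv.coe_addRight,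
        Equiv.mulLeft₀_apply]
    have hkey : ∀ w, gperm ((h : Equiv.Perm F) w) =
        (((ψ (tA d) : A) : Equiv.Perm F) * ((ψ (mA c hc) : A) : Equiv.Perm F)) (gperm w) := by
      intro w
      rw [Equiv.Perm.mul_apply, hfs, hα, hf w, hgval, hgval]
      simp only [Equiv.coe_addRight]
      rw [add_pow_char_pow, mul_pow, hτc, hατ d]
      have hb := hconst c hc ((s : F)) b hfs
      linear_combination -hb
    have hconj : gperm * (h : Equiv.Perm F) * gperm⁻¹ =
        ((ψ (tA d) : A) : Equiv.Perm F) * ((ψ (mA c hc) : A) : Equiv.Perm F) :=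
      AGL_conj_eq _ _ _ hkey
    apply Subtype.ext
    show gperm * (h : Equiv.Perm F) * gperm⁻¹ = ((ψ h : A) : Equiv.Perm F)
    rw [hconj, hdec, map_mul, hAcoe_mul]
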